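/- Let q be a prime power, h ≥ 2, and L = {(x : Tr(x) : y) : x ∈ F_{q^h}, y ∈ F_q, (x,y) ≠ (0,0)} ⊆ PG(2, q^h). Then L is a blocking set: every line of PG(2, q^h) contains at least one point of L. -/

import Mathlib

/-- The relative trace `x ↦ x + x^q + ⋯ + x^{q^{h-1}}`. -/
def Tr (q h : ℕ) {K : Type*} [Field K] (x : K) : K :=
  ∑ i ∈ Finset.range h, x ^ q ^ i

/-- The line of `PG(2, K)` with equation `a 0 * X + a 1 * Y + a 2 * Z = 0`. -/
def projLine {K : Type*} [Field K] (a : Fin 3 → K) :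
    Set (Projectivization K (Fin 3 → K)) :=
  {P | ∑ i, a i * P.rep i = 0}

/-- A subset of `PG(2, K)` is a line if it is `projLine a` for some nonzero `a`. -/
def IsLine {K : Type*} [Field K] (ℓ : Set (Projectivization K (Fin 3 → K))) : Prop :=
  ∃ a : Fin 3 → K, a ≠ 0 ∧ ℓ = projLine a

/-- The trace-construction point set
`{(x : Tr(x) : y) : x ∈ F_{q^h}, y ∈ F_q, (x,y) ≠ (0,0)}` in `PG(2, q^h)`. -/
def traceSet (q h : ℕ) (F K : Type*) [Field F] [Field K] [Algebra F K] :
    Set (Projectivization K (Fin 3 → K)) :=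
  {P | ∃ (x : K) (y : F), (x ≠ 0 ∨ y ≠ 0) ∧
    ∃ hv : (![x, Tr q h x, algebraMap F K y] : Fin 3 → K) ≠ 0,
      P = Projectivization.mk K (![x, Tr q h x, algebraMap F K y]) hv}

/-- The trace construction is a blocking set: every line of
`PG(2, q^h)` contains at least one of its points. -/
theorem stmt_3 {F K : Type*} [Field F] [Field K] [Algebra F K]
    [Fintype F] [Fintype K]
    (q h : ℕ) (hq : IsPrimePow q) (hcard : Fintype.card F = q)
    (hh : 2 ≤ h) (hrank : Module.finrank F K = h)
    (a : Fin 3 → K) (ha : a ≠ 0) :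
    (projLine a ∩ traceSet q h F K).Nonempty := by
  classical
  obtain ⟨p, k, hp, hk, hpk⟩ := hq
  haveI hpprime : Fact p.Prime := ⟨hp.nat_prime⟩
  -- characteristic of F is p
  have hpchar : p = ringChar F := by
    haveI : CharP F (ringChar F) := ringChar.charP F
    obtain ⟨n, hn, hcard'⟩ := FiniteField.card F (ringChar F)
    have hdvd : p ∣ ringChar F ^ (n : ℕ) := by
      rw [← hcard', hcard, ← hpk]
      exact dvd_pow_self p hk.ne'
    exact (Nat.prime_dvd_prime_iff_eq hp.nat_prime hn).mp
      (hp.nat_prime.dvd_of_dvd_pow hdvd)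
  haveI : CharP F p := hpchar ▸ ringChar.charP F
  haveI : CharP K p := charP_of_injective_algebraMap (algebraMap F K).injective p
  -- trace is additive
  have hTr : ∀ x y : K, Tr q h (x + y) = Tr q h x + Tr q h y := by
    intro x y
    unfold Tr
    rw [← Finset.sum_add_distrib]
    refine Finset.sum_congr rfl fun i _ => ?_
    rw [← hpk, ← pow_mul]
    exact add_pow_char_pow (R := K) (p := p) x y (k*i)
  -- cardinality of K
  have hcardK : Fintype.card K = q ^ h := by
    rw [Module.card_eq_pow_finrank (K := F) (V := K), hcard, hrank]
  -- pigeonhole: the map (x, y) ↦ a 0 * x + a 1 * Tr x + a 2 * y is not injective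
  have hq1 : 1 < q := by
    rw [← hpk]; exact Nat.one_lt_pow hk.ne' hp.nat_prime.one_lt
  have hlt : Fintype.card K < Fintype.card (K × F) := by
    rw [Fintype.card_prod, hcard, hcardK]
    have : 0 < q ^ h := pow_pos (by omega) h
    nlinarith
  obtain ⟨⟨x₁, y₁⟩, ⟨x₂, y₂⟩, hne, heq⟩ :=
    Fintype.exists_ne_map_eq_of_card_lt
      (fun z : K × F => a 0 * z.1 + a 1 * Tr q h z.1 + a 2 * algebraMap F K z.2) hlt
  set x := x₁ - x₂ with hx
  set y := y₁ - y₂ with hy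
  have hxy : ¬(x = 0 ∧ y = 0) := by
    rintro ⟨h1, h2⟩
    exact hne (Prod.ext (by linear_combination (norm := ring_nf) h1 - hx)
      (by linear_combination (norm := ring_nf) h2 - hy))
  have hTrsub : Tr q h x = Tr q h x₁ - Tr q h x₂ := by
    have := hTr x x₂
    rw [hx, sub_add_cancel] at this
    linear_combination -this
  have key : a 0 * x + a 1 * Tr q h x + a 2 * algebraMap F K y = 0 := by
    simp only [hx, hy, map_sub, hTrsub] at *
    ring_nf
    ring_nf at heq
    linear_combination heq + a 1 * hTrsub
  -- the vector
  set v : Fin 3 → K := ![x, Tr q h x, algebraMap F K y] with hv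
  have hvne : v ≠ 0 := by
    intro h0
    rcases not_and_or.mp hxy with hx0 | hy0
    · exact hx0 (by simpa [hv] using congrFun h0 0)
    · have : algebraMap F K y = 0 := by simpa [hv] using congrFun h0 2
      exact hy0 ((map_eq_zero _).mp this)
  refine ⟨Projectivization.mk K v hvne, ?_, ?_⟩
  · -- in projLine
    have hrep := Projectivization.mk_rep (Projectivization.mk K v hvne)
    rw [Projectivization.mk_eq_mk_iff] at hrep
    obtain ⟨c, hc⟩ := hrep
    show ∑ i, a i * (Projectivization.mk K v hvne).rep i = 0
    have hrepv : ∀ i, (Projectivization.mk K v hvne).rep i = (c : K) * v i := by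
      intro i; rw [← hc]; rfl
    simp only [hrepv]
    rw [Fin.sum_univ_three]
    have : v 0 = x ∧ v 1 = Tr q h x ∧ v 2 = algebraMap F K y := by
      refine ⟨rfl, rfl, rfl⟩
    obtain ⟨e0, e1, e2⟩ := this
    rw [e0, e1, e2]
    linear_combination (c : K) * key
  · exact ⟨x, y, not_and_or.mp hxy |>.imp id id, hvne, rfl⟩
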